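/- For weights α∈(0,1) and the function f(α) = min{α/(1−α), (1−α)/(αφ), φ(1−α)/(α(φ+1))} with φ=(1+√5)/2, the maximum of f over (0,1) is attained at the α where α/(1−α) = (1−α)/(αφ), and the maximal value is strictly less than 1. -/

import Mathlib

noncomputable def gold : ℝ := (1 + Real.sqrt 5) / 2

/-- The minimum of the three approximation ratios arising in the two-agent counterexample. -/
noncomputable def f (α : ℝ) : ℝ :=
  min (α / (1 - α)) (min ((1 - α) / (α * gold)) (gold * (1 - α) / (α * (gold + 1))))

lemma gold_gt_one : (1:ℝ) < gold := by
  have h : (2:ℝ) < Real.sqrt 5 := by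
    have := Real.sq_sqrt (by norm_num : (5:ℝ) ≥ 0)
    nlinarith [Real.sqrt_nonneg 5]
  unfold gold; linarith

lemma goldSq : gold ^ 2 = gold + 1 := by
  have := Real.sq_sqrt (by norm_num : (5:ℝ) ≥ 0)
  unfold gold; nlinarith

/-- The maximum of `f` over `(0,1)` is attained at the `α` where
`α/(1-α) = (1-α)/(αφ)`, and the maximal value is strictly less than 1. -/
theorem max_of_min_ratios :
    ∃ α : ℝ, 0 < α ∧ α < 1 ∧
      α / (1 - α) = (1 - α) / (α * gold) ∧
      (∀ β : ℝ, 0 < β → β < 1 → f β ≤ f α) ∧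
      f α < 1 := by
  set s : ℝ := Real.sqrt gold with hs_def
  have hg1 : (1:ℝ) < gold := gold_gt_one
  have hg0 : (0:ℝ) < gold := by linarith
  have hs2 : s ^ 2 = gold := Real.sq_sqrt (le_of_lt hg0)
  have hs1 : (1:ℝ) < s := by nlinarith [Real.sqrt_nonneg gold]
  have hs0 : (0:ℝ) < s := by linarith
  set α : ℝ := 1 / (1 + s) with hα_def
  have h1s : (0:ℝ) < 1 + s := by linarith
  have hα0 : 0 < α := by positivity
  have hα1 : α < 1 := by
    rw [hα_def, div_lt_one h1s]; linarith
  have h1α : (0:ℝ) < 1 - α := by linarith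
  have he1 : α / (1 - α) = 1 / s := by
      rw [hα_def]; field_simp; simp [ne_of_gt hs0]
  have he2 : (1 - α) / (α * gold) = 1 / s := by
    rw [hα_def]; rw [div_eq_div_iff (by positivity) (ne_of_gt hs0)]
    field_simp
    nlinarith [hs2, goldSq]
  have he3 : gold * (1 - α) / (α * (gold + 1)) = 1 / s := by
    rw [hα_def]; rw [div_eq_div_iff (by positivity) (ne_of_gt hs0)]
    field_simp
    nlinarith [hs2, goldSq]
  have hfα : f α = 1 / s := by
    rw [f, he1, he2, he3, min_self, min_self]
  refine ⟨α, hα0, hα1, by rw [he1, he2], ?_, ?_⟩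
  · intro β hβ0 hβ1
    have h1β : (0:ℝ) < 1 - β := by linarith
    rw [hfα]
    rcases le_total β α with h | h
    · calc f β ≤ β / (1 - β) := min_le_left _ _
        _ ≤ α / (1 - α) := by
            rw [div_le_div_iff₀ h1β h1α]; nlinarith
        _ = 1 / s := he1
    · calc f β ≤ (1 - β) / (β * gold) := le_trans (min_le_right _ _) (min_le_left _ _)
        _ ≤ (1 - α) / (α * gold) := by
            rw [div_le_div_iff₀ (by positivity) (by positivity)]; nlinarith
        _ = 1 / s := he2
  · rw [hfα, div_lt_one hs0]; exact hs1
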